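/- arXiv:2506.22687 — 6 statements merged into one kernel-verified Lean document; each statement's English description precedes it below -/
import Mathlib

section
/- The interface of a sequential circuit preserves operand boundaries: if λ₁ ←α− λ₀ −β→ λ₂ is a sequentiable span with pushout cospan λ₁ −γ→ λ₃ ←θ− λ₂, then γ_V maps invars of λ₁ into invars of λ₃, and θ_V maps outvars of λ₂ into outvars of λ₃. -/
/-- A bare circuit: variables, units, input/output flows with their structure maps. -/
structure Circuit where
  V : Type
  U : Type
  I : Type
  O : Type
  s : I → V
  t : O → V
  tau : I → U
  sigma : O → U
  c : V → Bool   -- `true` = control (unit) type, `false` = Boolean type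

/-- Invars: variables not in the image of the output-flow target map. -/
def Circuit.invars (C : Circuit) : Set C.V := {v | v ∉ Set.range C.t}

/-- Outvars: variables not in the image of the input-flow source map. -/
def Circuit.outvars (C : Circuit) : Set C.V := {v | v ∉ Set.range C.s}

/-- The relation generating the pushout identifications on variables:
`f(a)` (in the left circuit) is glued to `g(a)` (in the right circuit). -/
def poRel {A X Y : Type} (f : A → X) (g : A → Y) : X ⊕ Y → X ⊕ Y → Prop :=
  fun p q => ∃ a, p = Sum.inl (f a) ∧ q = Sum.inr (g a)

/-- The pushout `C +_{λ₀} D` of a span with a trivial apex circuit (no units,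
no flows, variable type `A`), computed componentwise: variables are the quotient
of the disjoint union by the gluing relation; units and flows are disjoint
unions (the apex contributes none). -/
def po (C D : Circuit) {A : Type} (f : A → C.V) (g : A → D.V)
    (hc : ∀ a, C.c (f a) = D.c (g a)) : Circuit where
  V := Quot (poRel f g)
  U := C.U ⊕ D.U
  I := C.I ⊕ D.I
  O := C.O ⊕ D.O
  s := Sum.elim (fun i => Quot.mk (poRel f g) (Sum.inl (C.s i)))
                (fun i => Quot.mk (poRel f g) (Sum.inr (D.s i)))
  t := Sum.elim (fun o => Quot.mk (poRel f g) (Sum.inl (C.t o)))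
                (fun o => Quot.mk (poRel f g) (Sum.inr (D.t o)))
  tau := Sum.map C.tau D.tau
  sigma := Sum.map C.sigma D.sigma
  c := Quot.lift (Sum.elim C.c D.c) (by rintro p q ⟨a, rfl, rfl⟩; simpa using hc a)

/-- The canonical morphism (on variables) from the left circuit into the pushout. -/
def poInl (C D : Circuit) {A : Type} (f : A → C.V) (g : A → D.V)
    (hc : ∀ a, C.c (f a) = D.c (g a)) (v : C.V) : (po C D f g hc).V :=
  Quot.mk (poRel f g) (Sum.inl v)

/-- The canonical morphism (on variables) from the right circuit into the pushout. -/
def poInr (C D : Circuit) {A : Type} (f : A → C.V) (g : A → D.V)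
    (hc : ∀ a, C.c (f a) = D.c (g a)) (v : D.V) : (po C D f g hc).V :=
  Quot.mk (poRel f g) (Sum.inr v)



/-- Closed-form characterization of the equivalence closure of `poRel` when
`f` and `g` are injective. -/
def poRelClosed {A X Y : Type} (f : A → X) (g : A → Y) : X ⊕ Y → X ⊕ Y → Prop :=
  fun p q => p = q ∨ (∃ a, p = Sum.inl (f a) ∧ q = Sum.inr (g a)) ∨
    (∃ a, p = Sum.inr (g a) ∧ q = Sum.inl (f a))

theorem eqvGen_poRel {A X Y : Type} {f : A → X} {g : A → Y}
    (hf : Function.Injective f) (hg : Function.Injective g)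
    {p q : X ⊕ Y} (h : Relation.EqvGen (poRel f g) p q) : poRelClosed f g p q := by
  induction h with
  | rel p q h => exact Or.inr (Or.inl h)
  | refl p => exact Or.inl rfl
  | symm p q _ ih =>
    rcases ih with rfl | ⟨a, rfl, rfl⟩ | ⟨a, rfl, rfl⟩
    · exact Or.inl rfl
    · exact Or.inr (Or.inr ⟨a, rfl, rfl⟩)
    · exact Or.inr (Or.inl ⟨a, rfl, rfl⟩)
  | trans p q r _ _ ih1 ih2 =>
    rcases ih1 with rfl | ⟨a, rfl, rfl⟩ | ⟨a, rfl, rfl⟩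
    · exact ih2
    · rcases ih2 with rfl | ⟨b, hb, _⟩ | ⟨b, hb, hb'⟩
      · exact Or.inr (Or.inl ⟨a, rfl, rfl⟩)
      · exact absurd hb (by simp)
      · obtain rfl := hg (Sum.inr.inj hb); exact Or.inl hb'.symm
    · rcases ih2 with rfl | ⟨b, hb, hb'⟩ | ⟨b, hb, _⟩
      · exact Or.inr (Or.inr ⟨a, rfl, rfl⟩)
      · obtain rfl := hf (Sum.inl.inj hb); exact Or.inl hb'.symm
      · exact absurd hb (by simp)

/-- Interface preservation for sequential circuits: for a sequentiable span
`λ₁ ←α− λ₀ −β→ λ₂` (trivial apex, monos, `α_V(V₀) ⊆ V₁⁻`, `β_V(V₀) ⊆ V₂⁺`)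
with induced pushout cospan `(γ, θ)`, `γ_V` maps invars of `λ₁` into invars of
the pushout and `θ_V` maps outvars of `λ₂` into outvars of the pushout. -/
theorem sequential_interface (C D : Circuit) {A : Type}
    (f : A → C.V) (g : A → D.V) (hc : ∀ a, C.c (f a) = D.c (g a))
    (hf : Function.Injective f) (hg : Function.Injective g)
    (hfo : ∀ a, f a ∈ C.outvars) (hgi : ∀ a, g a ∈ D.invars) :
    (poInl C D f g hc) '' C.invars ⊆ (po C D f g hc).invars ∧
    (poInr C D f g hc) '' D.outvars ⊆ (po C D f g hc).outvars := by
  constructor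
  · rintro _ ⟨v, hv, rfl⟩ ⟨o, ho⟩
    rcases o with o | o
    · have h : Relation.EqvGen (poRel f g) (Sum.inl v) (Sum.inl (C.t o)) :=
        Quot.eqvGen_exact ho.symm
      rcases eqvGen_poRel hf hg h with h' | ⟨a, h1, h2⟩ | ⟨a, h1, _⟩
      · exact hv ⟨o, (Sum.inl.inj h').symm⟩
      · exact absurd h2 (by simp)
      · exact absurd h1 (by simp)
    · have h : Relation.EqvGen (poRel f g) (Sum.inl v) (Sum.inr (D.t o)) :=
        Quot.eqvGen_exact ho.symm
      rcases eqvGen_poRel hf hg h with h' | ⟨a, h1, h2⟩ | ⟨a, h1, _⟩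
      · exact absurd h' (by simp)
      · exact hgi a ⟨o, Sum.inr.inj h2⟩
      · exact absurd h1 (by simp)
  · rintro _ ⟨v, hv, rfl⟩ ⟨i, hi⟩
    rcases i with i | i
    · have h : Relation.EqvGen (poRel f g) (Sum.inr v) (Sum.inl (C.s i)) :=
        Quot.eqvGen_exact hi.symm
      rcases eqvGen_poRel hf hg h with h' | ⟨a, h1, _⟩ | ⟨a, _, h2⟩
      · exact absurd h' (by simp)
      · exact absurd h1 (by simp)
      · exact hfo a ⟨i, Sum.inl.inj h2⟩
    · have h : Relation.EqvGen (poRel f g) (Sum.inr v) (Sum.inr (D.s i)) :=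
        Quot.eqvGen_exact hi.symm
      rcases eqvGen_poRel hf hg h with h' | ⟨a, h1, _⟩ | ⟨a, _, h2⟩
      · exact hv ⟨i, (Sum.inr.inj h').symm⟩
      · exact absurd h1 (by simp)
      · exact absurd h2 (by simp)
end

section
/- The unit circuit Λ (the trivial circuit with exactly one control variable, no units, no flows) is a left and right identity for sequencing up to isomorphism: for any circuit λ and any sequentiable span ρ with Λ as one operand, Λ ▷_ρ λ ≅ λ and λ ▷_ρ Λ ≅ λ. -/
/-- Isomorphism of circuits: componentwise bijections commuting with all
structure maps and the typing. -/
structure CircIso (C D : Circuit) where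
  eV : C.V ≃ D.V
  eU : C.U ≃ D.U
  eI : C.I ≃ D.I
  eO : C.O ≃ D.O
  hs : ∀ i, D.s (eI i) = eV (C.s i)
  ht : ∀ o, D.t (eO o) = eV (C.t o)
  htau : ∀ i, D.tau (eI i) = eU (C.tau i)
  hsigma : ∀ o, D.sigma (eO o) = eU (C.sigma o)
  hc : ∀ v, D.c (eV v) = C.c v

/-- The unit circuit `Λ`: exactly one control variable, no units, no flows. -/
def unitCircuit : Circuit where
  V := PUnit
  U := Empty
  I := Empty
  O := Empty
  s := Empty.elim
  t := Empty.elim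
  tau := Empty.elim
  sigma := Empty.elim
  c := fun _ => true

/-- The unit circuit `Λ` is a left and right identity for (partial or total)
sequencing up to isomorphism: for any sequentiable span with `Λ` as one
operand, `Λ ▷ρ λ ≅ λ` and `λ ▷ρ Λ ≅ λ`.  (The apex of such a span is a trivial
circuit, hence has a nonempty variable set injecting into `Λ`'s.) -/
theorem unit_circuit_sequencing_identity (C : Circuit)
    {A : Type} [Nonempty A] (fL : A → unitCircuit.V) (gL : A → C.V)
    (hfL : Function.Injective fL) (hgL : Function.Injective gL)
    (hgLi : ∀ a, gL a ∈ C.invars) (htypL : ∀ a, C.c (gL a) = true)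
    {A' : Type} [Nonempty A'] (fR : A' → C.V) (gR : A' → unitCircuit.V)
    (hfR : Function.Injective fR) (hgR : Function.Injective gR)
    (hfRo : ∀ a, fR a ∈ C.outvars) (htypR : ∀ a, C.c (fR a) = true) :
    Nonempty (CircIso (po unitCircuit C fL gL (fun a => (htypL a).symm)) C) ∧
    Nonempty (CircIso (po C unitCircuit fR gR (fun a => htypR a)) C) := by
  have hAss : ∀ a b : A, a = b := fun a b => hfL (Subsingleton.elim (α := PUnit) _ _)
  have hA'ss : ∀ a b : A', a = b := fun a b => hgR (Subsingleton.elim (α := PUnit) _ _)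
  obtain ⟨a₀⟩ := ‹Nonempty A›
  obtain ⟨a₀'⟩ := ‹Nonempty A'›
  constructor
  · -- left identity
    set hc := (fun a => (htypL a).symm)
    refine ⟨{
      eV := {
        toFun := Quot.lift (Sum.elim (fun _ => gL a₀) id)
          (by rintro p q ⟨a, rfl, rfl⟩; simp [hAss a₀ a])
        invFun := fun v => Quot.mk _ (Sum.inr v)
        left_inv := by
          intro x
          refine Quot.induction_on x ?_
          rintro (u | v)
          · exact (Quot.sound ⟨a₀, by cases u; rfl, rfl⟩ :
              Quot.mk (poRel fL gL) (Sum.inl (fL a₀)) = Quot.mk _ (Sum.inr (gL a₀))).symm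
          · rfl
        right_inv := fun v => rfl }
      eU := Equiv.emptySum Empty C.U
      eI := Equiv.emptySum Empty C.I
      eO := Equiv.emptySum Empty C.O
      hs := by rintro (i | i); exact Empty.elim i; simp [Equiv.emptySum, Equiv.sumComm, Equiv.sumEmpty, po]; rfl
      ht := by rintro (o | o); exact Empty.elim o; simp [Equiv.emptySum, Equiv.sumComm, Equiv.sumEmpty, po]; rfl
      htau := by rintro (i | i); exact Empty.elim i; simp [Equiv.emptySum, Equiv.sumComm, Equiv.sumEmpty, po]; rfl
      hsigma := by rintro (o | o); exact Empty.elim o; simp [Equiv.emptySum, Equiv.sumComm, Equiv.sumEmpty, po]; rfl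
      hc := by
        intro v
        refine Quot.induction_on v ?_
        rintro (u | w)
        · exact htypL a₀
        · rfl }⟩
  · refine ⟨{
      eV := {
        toFun := Quot.lift (Sum.elim id (fun _ => fR a₀'))
          (by rintro p q ⟨a, rfl, rfl⟩; simp [hA'ss a₀' a])
        invFun := fun v => Quot.mk _ (Sum.inl v)
        left_inv := by
          intro x
          refine Quot.induction_on x ?_
          rintro (v | u)
          · rfl
          · exact (Quot.sound ⟨a₀', rfl, by cases u; rfl⟩ :
              Quot.mk (poRel fR gR) (Sum.inl (fR a₀')) = Quot.mk _ (Sum.inr (gR a₀')))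
        right_inv := fun v => rfl }
      eU := Equiv.sumEmpty C.U Empty
      eI := Equiv.sumEmpty C.I Empty
      eO := Equiv.sumEmpty C.O Empty
      hs := by rintro (i | i); rfl; exact Empty.elim i
      ht := by rintro (o | o); rfl; exact Empty.elim o
      htau := by rintro (i | i); rfl; exact Empty.elim i
      hsigma := by rintro (o | o); rfl; exact Empty.elim o
      hc := by
        intro v
        refine Quot.induction_on v ?_
        rintro (w | u)
        · rfl
        · exact htypR a₀' }⟩
end

section
/- Total sequencing of circuits is associative up to isomorphism: (λ₁ ⊵_{ρ₁} λ₂) ⊵_{ρ₄} λ₃ ≅ λ₁ ⊵_{ρ₃} (λ₂ ⊵_{ρ₂} λ₃) where the spans ρ₃ and ρ₄ are derived from ρ₁ and ρ₂ by composing with the pushout injections. -/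
section AssocAux
variable {A B : Type} (C₁ C₂ C₃ : Circuit)
  (α : A → C₁.V) (β : A → C₂.V) (φ : B → C₂.V) (ψ : B → C₃.V)
  (hαβ : ∀ a, C₁.c (α a) = C₂.c (β a)) (hφψ : ∀ b, C₂.c (φ b) = C₃.c (ψ b))

def assocF :
    (po (po C₁ C₂ α β hαβ) C₃
        (fun b => poInr C₁ C₂ α β hαβ (φ b)) ψ (fun b => hφψ b)).V →
    (po C₁ (po C₂ C₃ φ ψ hφψ) α
        (fun a => poInl C₂ C₃ φ ψ hφψ (β a)) (fun a => hαβ a)).V :=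
  Quot.lift (Sum.elim
      (Quot.lift (Sum.elim
          (fun v₁ => Quot.mk _ (Sum.inl v₁))
          (fun v₂ => Quot.mk _ (Sum.inr (Quot.mk _ (Sum.inl v₂)))))
        (by rintro p q ⟨a, rfl, rfl⟩; exact Quot.sound ⟨a, rfl, rfl⟩))
      (fun v₃ => Quot.mk _ (Sum.inr (Quot.mk _ (Sum.inr v₃)))))
    (by
      rintro p q ⟨b, rfl, rfl⟩
      exact congrArg (fun x => Quot.mk _ (Sum.inr x)) (Quot.sound ⟨b, rfl, rfl⟩))

def assocG :
    (po C₁ (po C₂ C₃ φ ψ hφψ) α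
        (fun a => poInl C₂ C₃ φ ψ hφψ (β a)) (fun a => hαβ a)).V →
    (po (po C₁ C₂ α β hαβ) C₃
        (fun b => poInr C₁ C₂ α β hαβ (φ b)) ψ (fun b => hφψ b)).V :=
  Quot.lift (Sum.elim
      (fun v₁ => Quot.mk _ (Sum.inl (Quot.mk _ (Sum.inl v₁))))
      (Quot.lift (Sum.elim
          (fun v₂ => Quot.mk _ (Sum.inl (Quot.mk _ (Sum.inr v₂))))
          (fun v₃ => Quot.mk _ (Sum.inr v₃)))
        (by rintro p q ⟨b, rfl, rfl⟩; exact Quot.sound ⟨b, rfl, rfl⟩)))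
    (by
      rintro p q ⟨a, rfl, rfl⟩
      exact congrArg (fun x => Quot.mk _ (Sum.inl x)) (Quot.sound ⟨a, rfl, rfl⟩))

theorem assocGF : ∀ v, assocG C₁ C₂ C₃ α β φ ψ hαβ hφψ
    (assocF C₁ C₂ C₃ α β φ ψ hαβ hφψ v) = v := by
  intro v
  induction v using Quot.ind with
  | _ p =>
    rcases p with p | v₃
    · induction p using Quot.ind with
      | _ q => rcases q with v₁ | v₂ <;> rfl
    · rfl

theorem assocFG : ∀ v, assocF C₁ C₂ C₃ α β φ ψ hαβ hφψ
    (assocG C₁ C₂ C₃ α β φ ψ hαβ hφψ v) = v := by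
  intro v
  induction v using Quot.ind with
  | _ p =>
    rcases p with v₁ | p
    · rfl
    · induction p using Quot.ind with
      | _ q => rcases q with v₂ | v₃ <;> rfl

end AssocAux

/-- Total sequencing is associative up to isomorphism:
`(λ₁ ⊵ρ₁ λ₂) ⊵ρ₄ λ₃ ≅ λ₁ ⊵ρ₃ (λ₂ ⊵ρ₂ λ₃)`, where `ρ₁ : λ₁ ←α− λ₀ −β→ λ₂` and
`ρ₂ : λ₂ ←φ− λ₄ −ψ→ λ₃` are totally sequentiable spans (trivial apexes, monos,
`α(V₀) = V₁⁻`, `β(V₀) = V₂⁺`, `φ(V₄) = V₂⁻`, `ψ(V₄) = V₃⁺`), and the derived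
spans `ρ₃`, `ρ₄` are obtained by composing with the pushout injections. -/


theorem total_sequencing_assoc (C₁ C₂ C₃ : Circuit)
    {A B : Type} [Nonempty A] [Nonempty B]
    (α : A → C₁.V) (β : A → C₂.V) (φ : B → C₂.V) (ψ : B → C₃.V)
    (hα : Function.Injective α) (hβ : Function.Injective β)
    (hφ : Function.Injective φ) (hψ : Function.Injective ψ)
    (hαo : Set.range α = C₁.outvars) (hβi : Set.range β = C₂.invars)
    (hφo : Set.range φ = C₂.outvars) (hψi : Set.range ψ = C₃.invars)
    (hαβ : ∀ a, C₁.c (α a) = C₂.c (β a)) (hφψ : ∀ b, C₂.c (φ b) = C₃.c (ψ b)) :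
    Nonempty (CircIso
      (po (po C₁ C₂ α β hαβ) C₃
        (fun b => poInr C₁ C₂ α β hαβ (φ b)) ψ (fun b => hφψ b))
      (po C₁ (po C₂ C₃ φ ψ hφψ) α
        (fun a => poInl C₂ C₃ φ ψ hφψ (β a)) (fun a => hαβ a))) := by
  refine ⟨{
    eV := ⟨assocF C₁ C₂ C₃ α β φ ψ hαβ hφψ, assocG C₁ C₂ C₃ α β φ ψ hαβ hφψ,
      assocGF C₁ C₂ C₃ α β φ ψ hαβ hφψ, assocFG C₁ C₂ C₃ α β φ ψ hαβ hφψ⟩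
    eU := Equiv.sumAssoc C₁.U C₂.U C₃.U
    eI := Equiv.sumAssoc C₁.I C₂.I C₃.I
    eO := Equiv.sumAssoc C₁.O C₂.O C₃.O
    hs := ?_, ht := ?_, htau := ?_, hsigma := ?_, hc := ?_ }⟩
  · rintro ((i | i) | i) <;> rfl
  · rintro ((o | o) | o) <;> rfl
  · rintro ((i | i) | i) <;> rfl
  · rintro ((o | o) | o) <;> rfl
  · intro v
    induction v using Quot.ind with
    | _ p =>
      rcases p with p | v₃
      · induction p using Quot.ind with
        | _ q => rcases q with v₁ | v₂ <;> rfl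
      · rfl
end

section
/- Branching of circuits is associative up to isomorphism: (λ₂ ?_{ρ₁} λ₃) ?_{ρ₃} λ₄ ≅ λ₂ ?_{ρ₄} (λ₃ ?_{ρ₂} λ₄), provided λ₂, λ₃, λ₄ share common adjoint domains λ₀ (invars) and λ₁ (outvars). -/
section PoAssoc

variable (C₂ C₃ C₄ : Circuit) {A : Type}
    (f₂ : A → C₂.V) (f₃ : A → C₃.V) (f₄ : A → C₄.V)
    (h₂₃ : ∀ a, C₂.c (f₂ a) = C₃.c (f₃ a))
    (h₃₄ : ∀ a, C₃.c (f₃ a) = C₄.c (f₄ a))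

/-- forward map on variables for pushout associativity -/
def poAssocTo :
    (po (po C₂ C₃ f₂ f₃ h₂₃) C₄ (fun a => poInl C₂ C₃ f₂ f₃ h₂₃ (f₂ a)) f₄
      (fun a => (h₂₃ a).trans (h₃₄ a))).V →
    (po C₂ (po C₃ C₄ f₃ f₄ h₃₄) f₂ (fun a => poInl C₃ C₄ f₃ f₄ h₃₄ (f₃ a))
      (fun a => h₂₃ a)).V :=
  Quot.lift (Sum.elim
    (Quot.lift (Sum.elim
      (fun v₂ => Quot.mk _ (Sum.inl v₂))
      (fun v₃ => Quot.mk _ (Sum.inr (Quot.mk (poRel f₃ f₄) (Sum.inl v₃)))))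
      (by rintro _ _ ⟨a, rfl, rfl⟩; exact Quot.sound ⟨a, rfl, rfl⟩))
    (fun v₄ => Quot.mk _ (Sum.inr (Quot.mk (poRel f₃ f₄) (Sum.inr v₄)))))
    (by rintro _ _ ⟨a, rfl, rfl⟩
        exact (Quot.sound ⟨a, rfl, rfl⟩).trans
          (congrArg (fun x => Quot.mk _ (Sum.inr x)) (Quot.sound ⟨a, rfl, rfl⟩)))

/-- backward map on variables for pushout associativity -/
def poAssocInv :
    (po C₂ (po C₃ C₄ f₃ f₄ h₃₄) f₂ (fun a => poInl C₃ C₄ f₃ f₄ h₃₄ (f₃ a))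
      (fun a => h₂₃ a)).V →
    (po (po C₂ C₃ f₂ f₃ h₂₃) C₄ (fun a => poInl C₂ C₃ f₂ f₃ h₂₃ (f₂ a)) f₄
      (fun a => (h₂₃ a).trans (h₃₄ a))).V :=
  Quot.lift (Sum.elim
    (fun v₂ => Quot.mk _ (Sum.inl (Quot.mk (poRel f₂ f₃) (Sum.inl v₂))))
    (Quot.lift (Sum.elim
      (fun v₃ => Quot.mk _ (Sum.inl (Quot.mk (poRel f₂ f₃) (Sum.inr v₃))))
      (fun v₄ => Quot.mk _ (Sum.inr v₄)))
      (by rintro _ _ ⟨a, rfl, rfl⟩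
          exact (congrArg (fun x => Quot.mk _ (Sum.inl x))
            (Quot.sound ⟨a, rfl, rfl⟩)).symm.trans (Quot.sound ⟨a, rfl, rfl⟩))))
    (by rintro _ _ ⟨a, rfl, rfl⟩
        exact congrArg (fun x => Quot.mk _ (Sum.inl x)) (Quot.sound ⟨a, rfl, rfl⟩))

theorem po_assoc :
    Nonempty (CircIso
      (po (po C₂ C₃ f₂ f₃ h₂₃) C₄ (fun a => poInl C₂ C₃ f₂ f₃ h₂₃ (f₂ a)) f₄
        (fun a => (h₂₃ a).trans (h₃₄ a)))
      (po C₂ (po C₃ C₄ f₃ f₄ h₃₄) f₂ (fun a => poInl C₃ C₄ f₃ f₄ h₃₄ (f₃ a))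
        (fun a => h₂₃ a))) := by
  have hli : Function.LeftInverse (poAssocInv C₂ C₃ C₄ f₂ f₃ f₄ h₂₃ h₃₄)
      (poAssocTo C₂ C₃ C₄ f₂ f₃ f₄ h₂₃ h₃₄) := by
    intro x
    induction x using Quot.ind with
    | _ p =>
      rcases p with q | v₄
      · induction q using Quot.ind with
        | _ r => rcases r with v₂ | v₃ <;> rfl
      · rfl
  have hri : Function.RightInverse (poAssocInv C₂ C₃ C₄ f₂ f₃ f₄ h₂₃ h₃₄)
      (poAssocTo C₂ C₃ C₄ f₂ f₃ f₄ h₂₃ h₃₄) := by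
    intro x
    induction x using Quot.ind with
    | _ p =>
      rcases p with v₂ | q
      · rfl
      · induction q using Quot.ind with
        | _ r => rcases r with v₃ | v₄ <;> rfl
  refine ⟨{
    eV := ⟨poAssocTo C₂ C₃ C₄ f₂ f₃ f₄ h₂₃ h₃₄,
           poAssocInv C₂ C₃ C₄ f₂ f₃ f₄ h₂₃ h₃₄, hli, hri⟩
    eU := Equiv.sumAssoc _ _ _
    eI := Equiv.sumAssoc _ _ _
    eO := Equiv.sumAssoc _ _ _
    hs := ?_, ht := ?_, htau := ?_, hsigma := ?_, hc := ?_ }⟩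
  · rintro ((i | i) | i) <;> rfl
  · rintro ((o | o) | o) <;> rfl
  · rintro ((i | i) | i) <;> rfl
  · rintro ((o | o) | o) <;> rfl
  · intro v
    induction v using Quot.ind with
    | _ p =>
      rcases p with q | v₄
      · induction q using Quot.ind with
        | _ r => rcases r with v₂ | v₃ <;> rfl
      · rfl

end PoAssoc

/-- Branching is associative up to isomorphism:
`(λ₂ ?ρ₁ λ₃) ?ρ₃ λ₄ ≅ λ₂ ?ρ₄ (λ₃ ?ρ₂ λ₄)`, for circuits `λ₂, λ₃, λ₄` sharing
common trivial adjoint domains `λ₀` (invars, variables `V₀`) and `λ₁` (outvars,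
variables `V₁`); the iterated branchings use the derived adjoints obtained by
composing with the pushout injections. -/
theorem branching_assoc (C₂ C₃ C₄ : Circuit)
    {V₀ V₁ : Type} [Nonempty V₀] [Nonempty V₁]
    (i₂ : V₀ → C₂.V) (i₃ : V₀ → C₃.V) (i₄ : V₀ → C₄.V)
    (o₂ : V₁ → C₂.V) (o₃ : V₁ → C₃.V) (o₄ : V₁ → C₄.V)
    (hm₂ : Function.Injective (Sum.elim i₂ o₂))
    (hm₃ : Function.Injective (Sum.elim i₃ o₃))
    (hm₄ : Function.Injective (Sum.elim i₄ o₄))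
    (hi₂r : Set.range i₂ = C₂.invars) (hi₃r : Set.range i₃ = C₃.invars)
    (hi₄r : Set.range i₄ = C₄.invars)
    (ho₂r : Set.range o₂ = C₂.outvars) (ho₃r : Set.range o₃ = C₃.outvars)
    (ho₄r : Set.range o₄ = C₄.outvars)
    (h₂₃ : ∀ x : V₀ ⊕ V₁, C₂.c (Sum.elim i₂ o₂ x) = C₃.c (Sum.elim i₃ o₃ x))
    (h₃₄ : ∀ x : V₀ ⊕ V₁, C₃.c (Sum.elim i₃ o₃ x) = C₄.c (Sum.elim i₄ o₄ x)) :
    Nonempty (CircIso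
      (po (po C₂ C₃ (Sum.elim i₂ o₂) (Sum.elim i₃ o₃) h₂₃) C₄
        (fun x => poInl C₂ C₃ (Sum.elim i₂ o₂) (Sum.elim i₃ o₃) h₂₃
          (Sum.elim i₂ o₂ x))
        (Sum.elim i₄ o₄) (fun x => (h₂₃ x).trans (h₃₄ x)))
      (po C₂ (po C₃ C₄ (Sum.elim i₃ o₃) (Sum.elim i₄ o₄) h₃₄)
        (Sum.elim i₂ o₂)
        (fun x => poInl C₃ C₄ (Sum.elim i₃ o₃) (Sum.elim i₄ o₄) h₃₄
          (Sum.elim i₃ o₃ x))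
        (fun x => h₂₃ x))) :=
  po_assoc C₂ C₃ C₄ (Sum.elim i₂ o₂) (Sum.elim i₃ o₃) (Sum.elim i₄ o₄) h₂₃ h₃₄
end

section
/- Every NAND circuit (directed acyclic graph with input variables, output variables, and fan-in-2 fan-out-1 NAND gates) can be transformed into a control-driven Boolean circuit: the construction with V ≅ E ⊔ E, U ≅ G (gates), O ≅ E₁ ⊔ E₁, I ≅ E₂ ⊔ E₂ and the induced structure maps satisfies all the axioms of a control-driven Boolean circuit, including surjectivity of c, σ, τ and their restrictions to control-typed flows, and existence of a control invar and a control outvar. -/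
variable {N : Type} [Fintype N] [DecidableEq N]

/-- Out-degree of a node in an edge set. -/
def outdeg (E : Finset (N × N)) (n : N) : ℕ := (E.filter (fun e => e.1 = n)).card

/-- In-degree of a node in an edge set. -/
def indeg (E : Finset (N × N)) (n : N) : ℕ := (E.filter (fun e => e.2 = n)).card

/-- A node is a NAND gate iff it has fan-in 2 and fan-out 1. -/
def isGate (E : Finset (N × N)) (n : N) : Prop := indeg E n = 2 ∧ outdeg E n = 1

/-- A NAND circuit: a finite DAG whose nodes are input variables (in-degree 0),
output variables (out-degree 0) or fan-in-2 fan-out-1 NAND gates, with no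
isolated nodes, a nonempty edge set, and no edges from inputs to outputs
(edges run input→gate, gate→gate, or gate→output). -/
structure IsNandCircuit (E : Finset (N × N)) : Prop where
  edges_nonempty : E.Nonempty
  no_isolated : ∀ n : N, indeg E n ≠ 0 ∨ outdeg E n ≠ 0
  classify : ∀ n : N, indeg E n = 0 ∨ outdeg E n = 0 ∨ isGate E n
  no_input_to_output : ∀ e ∈ E, ¬ (indeg E e.1 = 0 ∧ outdeg E e.2 = 0)
  acyclic : WellFounded (fun a b : N => (b, a) ∈ E)

/-- Variables of the translated circuit: two copies of each edge
(`inl` = control copy, `inr` = Boolean copy). -/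
def Vc (E : Finset (N × N)) : Type := {e : N × N // e ∈ E} ⊕ {e : N × N // e ∈ E}

/-- Units of the translated circuit: the gates. -/
def Uc (E : Finset (N × N)) : Type := {n : N // isGate E n}

/-- `E₁`: edges whose source is a gate (i.e. all edges except input→gate ones). -/
def E1 (E : Finset (N × N)) : Type := {e : N × N // e ∈ E ∧ isGate E e.1}

/-- `E₂`: edges whose target is a gate (i.e. all edges except gate→output ones). -/
def E2 (E : Finset (N × N)) : Type := {e : N × N // e ∈ E ∧ isGate E e.2}

/-- Input flows: two copies of `E₂`. -/
def Ic (E : Finset (N × N)) : Type := E2 E ⊕ E2 E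

/-- Output flows: two copies of `E₁`. -/
def Oc (E : Finset (N × N)) : Type := E1 E ⊕ E1 E

/-- Source map `s : I → V`: copy `j` of edge `(m,n)` ↦ variable copy `j` of `(m,n)`. -/
def smap (E : Finset (N × N)) : Ic E → Vc E :=
  Sum.elim (fun e => Sum.inl ⟨e.1, e.2.1⟩) (fun e => Sum.inr ⟨e.1, e.2.1⟩)

/-- Target-unit map `τ : I → U`: copy `j` of edge `(m,n)` ↦ gate `n`. -/
def taumap (E : Finset (N × N)) : Ic E → Uc E :=
  Sum.elim (fun e => ⟨e.1.2, e.2.2⟩) (fun e => ⟨e.1.2, e.2.2⟩)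

/-- Target map `t : O → V`: copy `j` of edge `(m,n)` ↦ variable copy `j` of `(m,n)`. -/
def tmap (E : Finset (N × N)) : Oc E → Vc E :=
  Sum.elim (fun e => Sum.inl ⟨e.1, e.2.1⟩) (fun e => Sum.inr ⟨e.1, e.2.1⟩)

/-- Source-unit map `σ : O → U`: copy `j` of edge `(m,n)` ↦ gate `m`. -/
def sigmamap (E : Finset (N × N)) : Oc E → Uc E :=
  Sum.elim (fun e => ⟨e.1.1, e.2.2⟩) (fun e => ⟨e.1.1, e.2.2⟩)

/-- Typing: copy 1 (`inl`) is a control variable, copy 2 (`inr`) is Boolean. -/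
def cmap (E : Finset (N × N)) : Vc E → Bool :=
  Sum.elim (fun _ => true) (fun _ => false)

lemma exists_edge_out (E : Finset (N × N)) {n : N} (h : outdeg E n ≠ 0) :
    ∃ e ∈ E, e.1 = n := by
  obtain ⟨e, he⟩ := Finset.card_pos.mp (Nat.pos_of_ne_zero h)
  rw [Finset.mem_filter] at he
  exact ⟨e, he.1, he.2⟩

lemma exists_edge_in (E : Finset (N × N)) {n : N} (h : indeg E n ≠ 0) :
    ∃ e ∈ E, e.2 = n := by
  obtain ⟨e, he⟩ := Finset.card_pos.mp (Nat.pos_of_ne_zero h)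
  rw [Finset.mem_filter] at he
  exact ⟨e, he.1, he.2⟩

/-- Some edge has a non-gate source (i.e. there is an input→gate edge). -/
lemma exists_nongate_source (E : Finset (N × N)) (hN : IsNandCircuit E) :
    ∃ e ∈ E, ¬ isGate E e.1 := by
  classical
  by_contra hcon
  push_neg at hcon
  set G := Finset.univ.filter (fun n => isGate E n) with hG
  have h1 : E.card = ∑ n ∈ Finset.univ, outdeg E n :=
    Finset.card_eq_sum_card_fiberwise (f := Prod.fst) (fun e _ => Finset.mem_univ e.1)
  have h2 : E.card = ∑ n ∈ Finset.univ, indeg E n :=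
    Finset.card_eq_sum_card_fiberwise (f := Prod.snd) (fun e _ => Finset.mem_univ e.2)
  have hmemG : ∀ n, n ∈ G ↔ isGate E n := by
    intro n; simp [hG]
  have h1' : E.card = ∑ n ∈ G, outdeg E n := by
    rw [h1, Finset.sum_subset (Finset.subset_univ G)]
    intro n _ hn
    rw [hmemG] at hn
    unfold outdeg
    rw [Finset.card_eq_zero, Finset.filter_eq_empty_iff]
    intro e he heq
    exact hn (heq ▸ hcon e he)
  have h1'' : E.card = G.card := by
    rw [h1']
    rw [Finset.sum_congr rfl (fun n hn => ((hmemG n).mp hn).2)]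
    simp
  have h2' : 2 * G.card ≤ E.card := by
    rw [h2]
    calc 2 * G.card = ∑ n ∈ G, indeg E n := by
          rw [Finset.sum_congr rfl (fun n hn => ((hmemG n).mp hn).1)]
          simp [mul_comm]
      _ ≤ ∑ n ∈ Finset.univ, indeg E n :=
          Finset.sum_le_sum_of_subset (Finset.subset_univ G)
  have : E.card = 0 := by omega
  exact Finset.card_ne_zero_of_mem hN.edges_nonempty.choose_spec this

/-- Some edge has a non-gate target (i.e. there is a gate→output edge). -/
lemma exists_nongate_target (E : Finset (N × N)) (hN : IsNandCircuit E) :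
    ∃ e ∈ E, ¬ isGate E e.2 := by
  have key : ∀ n : N, isGate E n → ∃ e ∈ E, ¬ isGate E e.2 := by
    intro n
    induction n using WellFounded.induction hN.acyclic with
    | _ n ih =>
      intro hg
      have hout : outdeg E n ≠ 0 := by rw [hg.2]; simp
      obtain ⟨e, he, he1⟩ := exists_edge_out E hout
      by_cases hg2 : isGate E e.2
      · exact ih e.2 (by rw [← he1]; exact he) hg2
      · exact ⟨e, he, hg2⟩
  obtain ⟨e0, he0⟩ := hN.edges_nonempty
  by_cases h0 : isGate E e0.2
  · exact key e0.2 h0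
  · exact ⟨e0, he0, h0⟩

/-- Every NAND circuit is a control-driven Boolean circuit: the edge-doubling
construction satisfies all the axioms of a control-driven Boolean circuit —
surjectivity of `c`, `σ`, `τ`, surjectivity of the restrictions of `σ` and `τ`
to flows attached to control variables, and existence of a control invar and a
control outvar. -/
theorem nand_circuit_is_control_driven (E : Finset (N × N))
    (hN : IsNandCircuit E) :
    Function.Surjective (cmap E) ∧
    Function.Surjective (taumap E) ∧
    Function.Surjective (sigmamap E) ∧
    Function.Surjective
      (fun o : {o : Oc E // cmap E (tmap E o) = true} => sigmamap E o.1) ∧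
    Function.Surjective
      (fun i : {i : Ic E // cmap E (smap E i) = true} => taumap E i.1) ∧
    (∃ v : Vc E, cmap E v = true ∧ v ∉ Set.range (tmap E)) ∧
    (∃ w : Vc E, cmap E w = true ∧ w ∉ Set.range (smap E)) := by
  obtain ⟨e0, he0⟩ := hN.edges_nonempty
  refine ⟨?_, ?_, ?_, ?_, ?_, ?_, ?_⟩
  · -- cmap surjective
    intro b
    cases b with
    | true => exact ⟨Sum.inl ⟨e0, he0⟩, rfl⟩
    | false => exact ⟨Sum.inr ⟨e0, he0⟩, rfl⟩
  · -- taumap surjective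
    rintro ⟨n, hg⟩
    have hin : indeg E n ≠ 0 := by rw [hg.1]; simp
    obtain ⟨e, he, he2⟩ := exists_edge_in E hin
    refine ⟨Sum.inl ⟨e, he, by rw [he2]; exact hg⟩, ?_⟩
    exact Subtype.ext he2
  · -- sigmamap surjective
    rintro ⟨n, hg⟩
    have hout : outdeg E n ≠ 0 := by rw [hg.2]; simp
    obtain ⟨e, he, he1⟩ := exists_edge_out E hout
    refine ⟨Sum.inl ⟨e, he, by rw [he1]; exact hg⟩, ?_⟩
    exact Subtype.ext he1
  · -- restricted sigmamap surjective
    rintro ⟨n, hg⟩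
    have hout : outdeg E n ≠ 0 := by rw [hg.2]; simp
    obtain ⟨e, he, he1⟩ := exists_edge_out E hout
    refine ⟨⟨Sum.inl ⟨e, he, by rw [he1]; exact hg⟩, rfl⟩, ?_⟩
    exact Subtype.ext he1
  · -- restricted taumap surjective
    rintro ⟨n, hg⟩
    have hin : indeg E n ≠ 0 := by rw [hg.1]; simp
    obtain ⟨e, he, he2⟩ := exists_edge_in E hin
    refine ⟨⟨Sum.inl ⟨e, he, by rw [he2]; exact hg⟩, rfl⟩, ?_⟩
    exact Subtype.ext he2
  · -- control variable not in range of tmap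
    obtain ⟨e, he, hng⟩ := exists_nongate_source E hN
    refine ⟨Sum.inl ⟨e, he⟩, rfl, ?_⟩
    rintro ⟨o, ho⟩
    cases o with
    | inl x =>
      have : x.1 = e := by
        have := congrArg (Sum.elim Subtype.val Subtype.val) ho
        exact this
      exact hng (this ▸ x.2.2)
    | inr x => exact Sum.inr_ne_inl ho
  · -- control variable not in range of smap
    obtain ⟨e, he, hng⟩ := exists_nongate_target E hN
    refine ⟨Sum.inl ⟨e, he⟩, rfl, ?_⟩
    rintro ⟨i, hi⟩
    cases i with
    | inl x =>
      have : x.1 = e := by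
        have := congrArg (Sum.elim Subtype.val Subtype.val) hi
        exact this
      exact hng (this ▸ x.2.2)
    | inr x => exact Sum.inr_ne_inl hi
end

section
/- The control-driven circuit obtained from a NAND circuit by the edge-doubling construction is sound: every variable that is an invar or the source of an input flow has a path through units to an outvar. -/
set_option linter.unusedSectionVars false


variable {N : Type} [Fintype N] [DecidableEq N]

/-- One step of a chain `v → u → w` in the translated circuit: an input flow
from `v` into a unit and an output flow from the same unit to `w`. -/
def stepc (E : Finset (N × N)) (v w : Vc E) : Prop :=
  ∃ (i : Ic E) (o : Oc E),
    smap E i = v ∧ taumap E i = sigmamap E o ∧ tmap E o = w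

lemma outdeg_ne_zero {E : Finset (N × N)} {m n : N} (h : (m, n) ∈ E) :
    outdeg E m ≠ 0 := by
  simp only [outdeg, ne_eq, Finset.card_eq_zero, Finset.filter_eq_empty_iff, not_forall]
  exact ⟨(m, n), h, by simp⟩

lemma indeg_ne_zero {E : Finset (N × N)} {m n : N} (h : (m, n) ∈ E) :
    indeg E n ≠ 0 := by
  simp only [indeg, ne_eq, Finset.card_eq_zero, Finset.filter_eq_empty_iff, not_forall]
  exact ⟨(m, n), h, by simp⟩

lemma exists_out {E : Finset (N × N)} {n : N} (hg : isGate E n) :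
    ∃ p, (n, p) ∈ E := by
  have h1 : (E.filter (fun e => e.1 = n)).Nonempty := by
    rw [← Finset.card_pos]
    show 0 < outdeg E n
    rw [hg.2]; norm_num
  obtain ⟨e, he⟩ := h1
  simp only [Finset.mem_filter] at he
  exact ⟨e.2, by rw [← he.2]; exact he.1⟩

lemma target_gate {E : Finset (N × N)} (hN : IsNandCircuit E) {m n : N}
    (h : (m, n) ∈ E) (hm : ¬ isGate E m) : isGate E n := by
  rcases hN.classify n with h1 | h2 | h3
  · exact absurd h1 (indeg_ne_zero h)
  · rcases hN.classify m with g1 | g2 | g3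
    · exact absurd ⟨g1, h2⟩ (hN.no_input_to_output (m, n) h)
    · exact absurd g2 (outdeg_ne_zero h)
    · exact absurd g3 hm
  · exact h3

lemma inl_not_in_smap_range {E : Finset (N × N)} {e : N × N} (he : e ∈ E)
    (hp : ¬ isGate E e.2) : (Sum.inl ⟨e, he⟩ : Vc E) ∉ Set.range (smap E) := by
  rintro ⟨i, hi⟩
  rcases i with e2 | e2
  · have h2 : (⟨e2.1, e2.2.1⟩ : {e : N × N // e ∈ E}) = ⟨e, he⟩ := Sum.inl.inj hi
    have h3 : e2.1 = e := congrArg Subtype.val h2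
    exact hp (h3 ▸ e2.2.2)
  · exact Sum.inr_ne_inl hi

lemma reach_out {E : Finset (N × N)} (hN : IsNandCircuit E) :
    ∀ n : N, ∀ m : N, ∀ h : (m, n) ∈ E, isGate E n →
      ∀ v : Vc E, (v = Sum.inl ⟨(m, n), h⟩ ∨ v = Sum.inr ⟨(m, n), h⟩) →
        ∃ w : Vc E, w ∉ Set.range (smap E) ∧ Relation.TransGen (stepc E) v w := by
  intro n
  induction n using hN.acyclic.induction with
  | _ n IH =>
    intro m h hg v hv
    obtain ⟨p, hnp⟩ := exists_out hg
    set w1 : Vc E := Sum.inl ⟨(n, p), hnp⟩ with hw1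
    have hstep : stepc E v w1 := by
      rcases hv with rfl | rfl
      · exact ⟨Sum.inl ⟨(m, n), h, hg⟩, Sum.inl ⟨(n, p), hnp, hg⟩, rfl, rfl, rfl⟩
      · exact ⟨Sum.inr ⟨(m, n), h, hg⟩, Sum.inl ⟨(n, p), hnp, hg⟩, rfl, rfl, rfl⟩
    by_cases hp : isGate E p
    · obtain ⟨w, hw, htg⟩ := IH p hnp n hnp hp w1 (Or.inl rfl)
      exact ⟨w, hw, Relation.TransGen.head hstep htg⟩
    · exact ⟨w1, inl_not_in_smap_range hnp hp, Relation.TransGen.single hstep⟩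

/-- The control-driven circuit obtained from a NAND circuit by the
edge-doubling construction is sound: every variable that is an invar or the
source of an input flow has a path through units to an outvar. -/
theorem nand_translation_sound (E : Finset (N × N)) (hN : IsNandCircuit E) :
    ∀ v : Vc E, (v ∈ Set.range (smap E) ∨ v ∉ Set.range (tmap E)) →
      ∃ w : Vc E, w ∉ Set.range (smap E) ∧
        Relation.TransGen (stepc E) v w := by
  intro v hv
  have key : ∀ (e : N × N) (he : e ∈ E),
      (v = Sum.inl ⟨e, he⟩ ∨ v = Sum.inr ⟨e, he⟩) → isGate E e.2 →
      ∃ w : Vc E, w ∉ Set.range (smap E) ∧ Relation.TransGen (stepc E) v w := by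
    rintro ⟨m, n⟩ he hveq hg
    exact reach_out hN n m he hg v hveq
  -- identify the edge underlying v
  rcases hv with ⟨i, hi⟩ | hnt
  · rcases i with e2 | e2
    · subst hi
      exact key e2.1 e2.2.1 (Or.inl rfl) e2.2.2
    · subst hi
      exact key e2.1 e2.2.1 (Or.inr rfl) e2.2.2
  · -- v is not a target of any output flow: its source node is not a gate
    rcases v with e | e
    · refine key e.1 e.2 (Or.inl rfl) ?_
      refine target_gate (m := e.1.1) (n := e.1.2) hN e.2 ?_
      intro hgm
      exact hnt ⟨Sum.inl ⟨e.1, e.2, hgm⟩, rfl⟩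
    · refine key e.1 e.2 (Or.inr rfl) ?_
      refine target_gate (m := e.1.1) (n := e.1.2) hN e.2 ?_
      intro hgm
      exact hnt ⟨Sum.inr ⟨e.1, e.2, hgm⟩, rfl⟩
end
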